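/- Let V₁, V₂ be primitive isometries with output states ρ₁^out(n), ρ₂^out(n) in the stationary regime, and suppose T₁₂^n → 0 as n → ∞, where T₁₂(X) = V₁*(X ⊗ id_K)V₂. Then the outputs become asymptotically orthogonal: lim_{n→∞} tr[ρ₁^out(n)ρ₂^out(n)] = 0. -/

import Mathlib

open Matrix Filter
open scoped Kronecker ComplexOrder

noncomputable section

/-- The action of `Φ ⊗ id_n` on block matrices, used to define complete positivity. -/
def tensorId {a b : Type*} (Φ : Matrix a a ℂ → Matrix b b ℂ) (n : ℕ)
    (X : Matrix (a × Fin n) (a × Fin n) ℂ) : Matrix (b × Fin n) (b × Fin n) ℂ :=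
  fun p q => Φ (fun i j => X (i, p.2) (j, q.2)) p.1 q.1

/-- A map between matrix algebras is completely positive if `Φ ⊗ id_n` preserves
positive semidefiniteness for every `n`. -/
def IsCompletelyPositive {a b : Type*} [Fintype a] [Fintype b]
    (Φ : Matrix a a ℂ → Matrix b b ℂ) : Prop :=
  ∀ (n : ℕ) (X : Matrix (a × Fin n) (a × Fin n) ℂ), X.PosSemidef → (tensorId Φ n X).PosSemidef

/-- The map `X ↦ V₁* (X ⊗ 1_K) V₂` on `B(H₂, H₁)`, as a linear endomorphism.
For `V₁ = V₂ = V` this is the Heisenberg channel associated with the isometry `V`. -/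
def sandwich {α β : Type*} [Fintype α] [Fintype β] {k : ℕ}
    (V₁ : Matrix (α × Fin k) α ℂ) (V₂ : Matrix (β × Fin k) β ℂ) :
    Module.End ℂ (Matrix α β ℂ) where
  toFun X := V₁ᴴ * (X ⊗ₖ (1 : Matrix (Fin k) (Fin k) ℂ)) * V₂
  map_add' X Y := by simp [Matrix.add_kronecker, Matrix.add_mul, Matrix.mul_add]
  map_smul' c X := by simp [Matrix.smul_kronecker, Matrix.smul_mul, Matrix.mul_smul]

/-- The Kraus operators `K_i` of an isometry `V : H → H ⊗ K`,
defined by `K_i φ = (id ⊗ ⟨i|) V φ`. -/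
def kraus {D k : ℕ} (V : Matrix (Fin D × Fin k) (Fin D) ℂ) (i : Fin k) :
    Matrix (Fin D) (Fin D) ℂ :=
  fun a b => V (a, i) b

/-- The `n`-step Kraus operator `K_{ι(n-1)} ⋯ K_{ι(0)}` associated with a word `ι`. -/
def krausString {D k : ℕ} (V : Matrix (Fin D × Fin k) (Fin D) ℂ) :
    (n : ℕ) → (Fin n → Fin k) → Matrix (Fin D) (Fin D) ℂ
  | 0, _ => 1
  | n + 1, ι => kraus V (ι (Fin.last n)) * krausString V n (fun m => ι m.castSucc)

/-- The output state `tr_H [V(n) ρ V(n)*]` after `n` steps, a density matrix on `K^⊗n`. -/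
def outputState {D k : ℕ} (V : Matrix (Fin D × Fin k) (Fin D) ℂ)
    (ρ : Matrix (Fin D) (Fin D) ℂ) (n : ℕ) :
    Matrix (Fin n → Fin k) (Fin n → Fin k) ℂ :=
  fun ι ι' => Matrix.trace (krausString V n ι * ρ * (krausString V n ι')ᴴ)

/-- The Schrödinger (predual) transition map `ρ ↦ Σ_i K_i ρ K_i*`. -/
def schrodinger {D k : ℕ} (V : Matrix (Fin D × Fin k) (Fin D) ℂ)
    (ρ : Matrix (Fin D) (Fin D) ℂ) : Matrix (Fin D) (Fin D) ℂ :=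
  ∑ i, kraus V i * ρ * (kraus V i)ᴴ

/-- A linear endomorphism of a matrix algebra is primitive if some power of it maps every
nonzero positive semidefinite matrix to a positive definite one. -/
def PrimitiveMap {α : Type*} [Fintype α] [DecidableEq α]
    (T : Module.End ℂ (Matrix α α ℂ)) : Prop :=
  ∃ n : ℕ, ∀ X : Matrix α α ℂ, X.PosSemidef → X ≠ 0 → ((T ^ n) X).PosDef

/-- An isometry `V : H → H ⊗ K` is primitive if its channel `X ↦ V*(X ⊗ 1)V` is primitive. -/
def PrimitiveIso {D k : ℕ} (V : Matrix (Fin D × Fin k) (Fin D) ℂ) : Prop :=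
  PrimitiveMap (sandwich V V)

/-- The pure state `|x⟩⟨x|` associated with a vector `x`. -/
def outer {α : Type*} (x : α → ℂ) : Matrix α α ℂ := Matrix.vecMulVec x (star x)

/-- The trace norm of a matrix: the trace of `√(A* A)`. -/
def traceNorm {α : Type*} [Fintype α] [DecidableEq α] (A : Matrix α α ℂ) : ℝ :=
  (((Matrix.posSemidef_conjTranspose_mul_self A).1.eigenvectorUnitary : Matrix α α ℂ) *
    Matrix.diagonal ((fun x : ℝ => (x : ℂ)) ∘ (Real.sqrt ·) ∘ (Matrix.posSemidef_conjTranspose_mul_self A).1.eigenvalues) *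
    (star (Matrix.posSemidef_conjTranspose_mul_self A).1.eigenvectorUnitary : Matrix α α ℂ)).trace.re

/-- A quantum channel: a completely positive trace preserving linear map. -/
def IsCPTP {α β : Type*} [Fintype α] [Fintype β]
    (Φ : Matrix α α ℂ →ₗ[ℂ] Matrix β β ℂ) : Prop :=
  IsCompletelyPositive (Φ : Matrix α α ℂ → Matrix β β ℂ) ∧
    ∀ X : Matrix α α ℂ, (Φ X).trace = X.trace

lemma sandwich_apply_eq {D₁ D₂ k : ℕ} (V₁ : Matrix (Fin D₁ × Fin k) (Fin D₁) ℂ)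
    (V₂ : Matrix (Fin D₂ × Fin k) (Fin D₂) ℂ) (X : Matrix (Fin D₁) (Fin D₂) ℂ) :
    sandwich V₁ V₂ X = ∑ i, (kraus V₁ i)ᴴ * X * kraus V₂ i := by
  ext p q
  simp only [sandwich, LinearMap.coe_mk, AddHom.coe_mk, Matrix.mul_apply, Matrix.sum_apply,
    Matrix.conjTranspose_apply, kroneckerMap_apply, Fintype.sum_prod_type, Matrix.one_apply,
    kraus, Finset.mul_sum, Finset.sum_mul, mul_ite, mul_zero, ite_mul, zero_mul,
    Finset.sum_ite_eq, Finset.sum_ite_eq', Finset.mem_univ, if_true]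
  rw [Finset.sum_comm]
  exact Finset.sum_congr rfl fun _ _ => Finset.sum_congr rfl fun _ _ =>
    Finset.sum_congr rfl fun _ _ => by ring

lemma krausString_snoc {D k : ℕ} (V : Matrix (Fin D × Fin k) (Fin D) ℂ) (n : ℕ)
    (ι : Fin n → Fin k) (i : Fin k) :
    krausString V (n + 1) (Fin.snoc ι i) = kraus V i * krausString V n ι := by
  simp only [krausString, Fin.snoc_last, Fin.snoc_castSucc]

lemma sandwich_pow_apply {D₁ D₂ k : ℕ} (V₁ : Matrix (Fin D₁ × Fin k) (Fin D₁) ℂ)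
    (V₂ : Matrix (Fin D₂ × Fin k) (Fin D₂) ℂ) (n : ℕ) (X : Matrix (Fin D₁) (Fin D₂) ℂ) :
    ((sandwich V₁ V₂) ^ n) X
      = ∑ ι : Fin n → Fin k, (krausString V₁ n ι)ᴴ * X * krausString V₂ n ι := by
  induction n generalizing X with
  | zero =>
    simp [krausString]
  | succ n ih =>
    rw [pow_succ, Module.End.mul_apply, ih, sandwich_apply_eq]
    rw [← Fintype.sum_equiv (Fin.snocEquiv (fun _ => Fin k))
      (fun p => (krausString V₁ (n+1) (Fin.snocEquiv _ p))ᴴ * X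
        * krausString V₂ (n+1) (Fin.snocEquiv _ p)) _ (fun p => rfl)]
    rw [Fintype.sum_prod_type]
    rw [Finset.sum_comm]
    refine Finset.sum_congr rfl fun ι _ => ?_
    have : ∀ x : Fin k, (Fin.snocEquiv (fun _ => Fin k)) (x, ι) = Fin.snoc ι x := by
      intro x; ext m; simp [Fin.snocEquiv]
    simp only [this, krausString_snoc, Matrix.conjTranspose_mul]
    rw [Matrix.mul_sum, Matrix.sum_mul]
    refine Finset.sum_congr rfl fun i _ => ?_
    simp only [Matrix.mul_assoc]

lemma sum_std_trace {α β : Type*} [Fintype α] [DecidableEq α] [Fintype β] [DecidableEq β]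
    (M : Matrix β β ℂ) (N : Matrix α α ℂ) :
    ∑ a : α, ∑ d : β,
        (Matrix.single a d (1:ℂ) * M * (Matrix.single a d (1:ℂ))ᴴ * N).trace
      = M.trace * N.trace := by
  simp only [Matrix.trace, Matrix.diag, Matrix.mul_apply, Matrix.single,
    Matrix.conjTranspose_apply, Matrix.of_apply, ite_and, apply_ite (star : ℂ → ℂ), star_one, star_zero,
    ite_mul, mul_ite, zero_mul, mul_zero, one_mul, mul_one,
    Finset.sum_ite_eq, Finset.sum_ite_eq', Finset.mem_univ, if_true,
    Finset.mul_sum, Finset.sum_mul]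
  simp [Finset.sum_ite_eq, Finset.sum_ite_eq']


lemma trace_shuffle {α β : Type*} [Fintype α] [Fintype β]
    (E : Matrix α β ℂ) (ρ₁ A A' : Matrix α α ℂ) (ρ₂ B B' : Matrix β β ℂ) :
    (ρ₁ * (A'ᴴ * E * B') * ρ₂ * (Aᴴ * E * B)ᴴ).trace
      = (E * (B' * ρ₂ * Bᴴ) * Eᴴ * (A * ρ₁ * A'ᴴ)).trace := by
  simp only [Matrix.conjTranspose_mul, Matrix.conjTranspose_conjTranspose, Matrix.mul_assoc]
  rw [Matrix.trace_mul_comm]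
  simp only [Matrix.mul_assoc]
  rw [Matrix.trace_mul_comm]
  simp only [Matrix.mul_assoc]

lemma sum_swap4 {ι₁ ι₂ ι₃ ι₄ : Type*} [Fintype ι₁] [Fintype ι₂] [Fintype ι₃] [Fintype ι₄]
    (f : ι₁ → ι₂ → ι₃ → ι₄ → ℂ) :
    ∑ a : ι₁, ∑ d : ι₂, ∑ c : ι₃, ∑ b : ι₄, f a d c b
      = ∑ c : ι₃, ∑ b : ι₄, ∑ a : ι₁, ∑ d : ι₂, f a d c b :=
  calc ∑ a : ι₁, ∑ d : ι₂, ∑ c : ι₃, ∑ b : ι₄, f a d c b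
      = ∑ a : ι₁, ∑ c : ι₃, ∑ d : ι₂, ∑ b : ι₄, f a d c b :=
        Finset.sum_congr rfl fun a _ => Finset.sum_comm
    _ = ∑ c : ι₃, ∑ a : ι₁, ∑ d : ι₂, ∑ b : ι₄, f a d c b := Finset.sum_comm
    _ = ∑ c : ι₃, ∑ a : ι₁, ∑ b : ι₄, ∑ d : ι₂, f a d c b :=
        Finset.sum_congr rfl fun c _ => Finset.sum_congr rfl fun a _ => Finset.sum_comm
    _ = ∑ c : ι₃, ∑ b : ι₄, ∑ a : ι₁, ∑ d : ι₂, f a d c b :=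
        Finset.sum_congr rfl fun c _ => Finset.sum_comm

lemma key_identity {D₁ D₂ k : ℕ} (V₁ : Matrix (Fin D₁ × Fin k) (Fin D₁) ℂ)
    (V₂ : Matrix (Fin D₂ × Fin k) (Fin D₂) ℂ)
    (ρ₁ : Matrix (Fin D₁) (Fin D₁) ℂ) (ρ₂ : Matrix (Fin D₂) (Fin D₂) ℂ) (n : ℕ) :
    Matrix.trace (outputState V₁ ρ₁ n * outputState V₂ ρ₂ n)
      = ∑ a : Fin D₁, ∑ d : Fin D₂,
          Matrix.trace (ρ₁ * ((sandwich V₁ V₂ ^ n) (Matrix.single a d 1)) * ρ₂ *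
            (((sandwich V₁ V₂ ^ n) (Matrix.single a d 1)))ᴴ) := by
  have expand : ∀ (a : Fin D₁) (d : Fin D₂),
      Matrix.trace (ρ₁ * ((sandwich V₁ V₂ ^ n) (Matrix.single a d 1)) * ρ₂ *
        (((sandwich V₁ V₂ ^ n) (Matrix.single a d 1)))ᴴ)
      = ∑ ι' : Fin n → Fin k, ∑ ι : Fin n → Fin k,
          Matrix.trace (Matrix.single a d (1:ℂ)
            * (krausString V₂ n ι' * ρ₂ * (krausString V₂ n ι)ᴴ)
            * (Matrix.single a d (1:ℂ))ᴴ
            * (krausString V₁ n ι * ρ₁ * (krausString V₁ n ι')ᴴ)) := by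
    intro a d
    rw [sandwich_pow_apply]
    simp only [Matrix.conjTranspose_sum, Matrix.mul_sum, Matrix.sum_mul, Matrix.trace_sum]
    rw [Finset.sum_comm]
    refine Finset.sum_congr rfl fun ι' _ => ?_
    refine Finset.sum_congr rfl fun ι _ => ?_
    exact trace_shuffle _ _ _ _ _ _ _
  simp_rw [expand]
  rw [sum_swap4]
  have rhs_eq : ∀ (ι' ι : Fin n → Fin k),
      ∑ a : Fin D₁, ∑ d : Fin D₂,
        Matrix.trace (Matrix.single a d (1:ℂ)
          * (krausString V₂ n ι' * ρ₂ * (krausString V₂ n ι)ᴴ)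
          * (Matrix.single a d (1:ℂ))ᴴ
          * (krausString V₁ n ι * ρ₁ * (krausString V₁ n ι')ᴴ))
      = (krausString V₂ n ι' * ρ₂ * (krausString V₂ n ι)ᴴ).trace
        * (krausString V₁ n ι * ρ₁ * (krausString V₁ n ι')ᴴ).trace :=
    fun ι' ι => sum_std_trace _ _
  simp_rw [rhs_eq]
  rw [Matrix.trace]
  simp only [Matrix.diag_apply, Matrix.mul_apply, outputState]
  rw [Finset.sum_comm]
  exact Finset.sum_congr rfl fun ι' _ => Finset.sum_congr rfl fun ι _ => mul_comm _ _

/-- If `T₁₂^n → 0`, the stationary outputs of two primitive isometries become asymptotically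
orthogonal: `tr[ρ₁^out(n) ρ₂^out(n)] → 0`. -/
theorem outputs_asymptotically_orthogonal (D₁ D₂ k : ℕ)
    (V₁ : Matrix (Fin D₁ × Fin k) (Fin D₁) ℂ) (hV₁ : V₁ᴴ * V₁ = 1) (hP₁ : PrimitiveIso V₁)
    (V₂ : Matrix (Fin D₂ × Fin k) (Fin D₂) ℂ) (hV₂ : V₂ᴴ * V₂ = 1) (hP₂ : PrimitiveIso V₂)
    (ρ₁ : Matrix (Fin D₁) (Fin D₁) ℂ) (hρ₁pos : ρ₁.PosDef) (hρ₁tr : ρ₁.trace = 1)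
    (hρ₁stat : schrodinger V₁ ρ₁ = ρ₁)
    (ρ₂ : Matrix (Fin D₂) (Fin D₂) ℂ) (hρ₂pos : ρ₂.PosDef) (hρ₂tr : ρ₂.trace = 1)
    (hρ₂stat : schrodinger V₂ ρ₂ = ρ₂)
    (hT12 : ∀ X : Matrix (Fin D₁) (Fin D₂) ℂ,
      Filter.Tendsto (fun n => ((sandwich V₁ V₂) ^ n) X) Filter.atTop (nhds 0)) :
    Filter.Tendsto
      (fun n => Matrix.trace (outputState V₁ ρ₁ n * outputState V₂ ρ₂ n))
      Filter.atTop (nhds 0) := by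
  have hG : Continuous (fun X : Matrix (Fin D₁) (Fin D₂) ℂ =>
      Matrix.trace (ρ₁ * X * ρ₂ * Xᴴ)) :=
    (((continuous_const.matrix_mul continuous_id).matrix_mul continuous_const).matrix_mul
      continuous_id.matrix_conjTranspose).matrix_trace
  simp_rw [key_identity V₁ V₂ ρ₁ ρ₂]
  have h0 : (∑ _a : Fin D₁, ∑ _d : Fin D₂, (0:ℂ)) = 0 := by simp
  rw [← h0]
  refine tendsto_finset_sum _ fun a _ => tendsto_finset_sum _ fun d _ => ?_
  have h := (hG.tendsto 0).comp (hT12 (Matrix.single a d 1))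
  simpa [Function.comp_def] using h
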